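/- Let n ≥ 1, m ≥ 0, 𝔞 = (a_0,…,a_n) ∈ A_n(m), and let i ∈ M(𝔞) satisfy a_{i+1} > 0, and additionally a_{i−1} < a_{i+1} in case i ≥ 1. Define 𝔞′ = (a_0,…,a_{i−1}, a_i + 1, a_{i+1} − 1, a_{i+2},…,a_n) (one step of the raising algorithm). Then ω(𝔞′) = ω(𝔞), and consequently σ(𝔞′) = σ(𝔞). -/

import Mathlib

set_option maxHeartbeats 2000000


/- Common definitions following K. O'Hara's spread/degree and the signature
   refinement; elements of A_n(m) are lists of naturals of length n+1 and sum m. -/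

namespace OHara

/-- The spread of `a = (a_0, …, a_n)`: the maximum of `a_i + a_{i+1}` over `0 ≤ i ≤ n-1`
(`0` if the list has length ≤ 1). -/
def sprL (a : List ℕ) : ℕ :=
  (Finset.range (a.length - 1)).sup (fun i => a.getD i 0 + a.getD (i + 1) 0)

/-- `M(a)`: the set of left indices of maximal pairs. -/
def Mset (a : List ℕ) : Finset ℕ :=
  (Finset.range (a.length - 1)).filter (fun i => a.getD i 0 + a.getD (i + 1) 0 = sprL a)

/-- The connected component (maximal interval of consecutive integers) of `i` inside `S`. -/
def compF (S : Finset ℕ) (i : ℕ) : Finset ℕ :=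
  S.filter (fun j => Finset.Icc (min i j) (max i j) ⊆ S)

/-- The left endpoints of the maximal intervals of consecutive integers of `S`. -/
def leftEnds (S : Finset ℕ) : Finset ℕ :=
  S.filter (fun i => i = 0 ∨ (i - 1) ∉ S)

/-- O'Hara's degree: the sum over the maximal intervals `D` of `M(a)` of `⌈|D|/2⌉`. -/
def ecdL (a : List ℕ) : ℕ :=
  ∑ i ∈ leftEnds (Mset a), ((compF (Mset a) i).card + 1) / 2

/-- The set of active indices `Act(a) = M(a) ∪ (1 + M(a))`. -/
def ActF (a : List ℕ) : Finset ℕ :=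
  Mset a ∪ (Mset a).image (· + 1)

/-- An index `j` survives in `ω(a)` iff it is not active, or it is the left endpoint `c` of a
maximal interval `D = [c, c+d]` of `M(a)` with `d` odd (i.e. `|D|` even). -/
def survivesB (a : List ℕ) (j : ℕ) : Bool :=
  decide (j ∉ ActF a ∨ (j ∈ leftEnds (Mset a) ∧ Even (compF (Mset a) j).card))

/-- `ω(a)`: the result of removing from `a` the largest possible number of maximal pairs. -/
def omegaL (a : List ℕ) : List ℕ :=
  ((List.range a.length).filter (fun j => survivesB a j)).map (fun j => a.getD j 0)

/-- Fuel-driven recursion computing the signature (the fuel `a.length` in `sigmaL`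
always suffices, since `ω` shortens a list of length ≥ 3 by at least 2). -/
def sigmaAux : ℕ → List ℕ → List ℕ
  | _, [] => []
  | 0, a => [a.sum]
  | fuel + 1, a =>
    if a.length ≤ 2 then [a.sum]
    else List.replicate (ecdL a - 1) 0 ++ [sprL a - sprL (omegaL a)] ++ sigmaAux fuel (omegaL a)

/-- The signature `σ(a)`. -/
def sigmaL (a : List ℕ) : List ℕ := sigmaAux a.length a

/-- `m = Σ_{j=0}^k (j+1)·d_j` determined by a signature `(d_0, …, d_k)`. -/
def mOf (ds : List ℕ) : ℕ := ∑ j ∈ Finset.range ds.length, (j + 1) * ds.getD j 0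

/-- `Q_n(d_0, …, d_k)`: the set of elements of `A_n(m)` of signature `(d_0, …, d_k)`. -/
def Qset (n : ℕ) (ds : List ℕ) : Set (List ℕ) :=
  {a | a.length = n + 1 ∧ a.sum = mOf ds ∧ sigmaL a = ds}

/-- The rank `rk(a) = Σ i·a_i`. -/
def rkL (a : List ℕ) : ℕ := ∑ i ∈ Finset.range a.length, i * a.getD i 0

/-- `b` covers `a` in `A_n(m)`: `b` is obtained from `a` by replacing some consecutive pair
`(a_i, a_{i+1})` by `(a_i - 1, a_{i+1} + 1)`. -/
def coversL (b a : List ℕ) : Prop :=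
  ∃ i, i + 1 < a.length ∧ 0 < a.getD i 0 ∧
    b = (a.set i (a.getD i 0 - 1)).set (i + 1) (a.getD (i + 1) 0 + 1)

/-- Normalization phase of the raising algorithm: starting at index `i ∈ M(a)`, repeatedly
replace `i` by `i - 1` as long as `i ≥ 1` and `a_{i+1} = a_{i-1}`. -/
def rnormIdx (a : List ℕ) : ℕ → ℕ
  | 0 => 0
  | i + 1 => if a.getD (i + 2) 0 = a.getD i 0 then rnormIdx a i else i + 1

/-- One move of the raising algorithm from `(a, i)` with `i ∈ M(a)`: after normalizing the
index, either halt (`none`, at an initial element) or perform one step. -/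
def raiseMove (a : List ℕ) (i : ℕ) : Option (List ℕ × ℕ) :=
  let j := rnormIdx a i
  if a.getD (j + 1) 0 = 0 then none
  else some ((a.set j (a.getD j 0 + 1)).set (j + 1) (a.getD (j + 1) 0 - 1), j)

/-- The list of elements produced by iterating the raising algorithm (including the start). -/
def raiseList : ℕ → List ℕ → ℕ → List (List ℕ)
  | 0, a, _ => [a]
  | fuel + 1, a, i =>
    match raiseMove a i with
    | none => [a]
    | some (a', j) => a :: raiseList fuel a' j

/-- Normalization phase of the lowering algorithm: starting at index `i ∈ M(a)`, repeatedly
replace `i` by `i + 1` as long as `i ≤ n - 2` and `a_i = a_{i+2}` (fuel-driven). -/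
def lnormIdx (a : List ℕ) : ℕ → ℕ → ℕ
  | 0, i => i
  | fuel + 1, i =>
    if i + 2 < a.length ∧ a.getD i 0 = a.getD (i + 2) 0 then lnormIdx a fuel (i + 1) else i

/-- One move of the lowering algorithm from `(a, i)` with `i ∈ M(a)`: after normalizing the
index, either halt (`none`, at a terminal element) or perform one step. -/
def lowerMove (a : List ℕ) (i : ℕ) : Option (List ℕ × ℕ) :=
  let j := lnormIdx a a.length i
  if a.getD j 0 = 0 then none
  else some ((a.set j (a.getD j 0 - 1)).set (j + 1) (a.getD (j + 1) 0 + 1), j)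

/-- The list of elements produced by iterating the lowering algorithm (including the start). -/
def lowerList : ℕ → List ℕ → ℕ → List (List ℕ)
  | 0, a, _ => [a]
  | fuel + 1, a, i =>
    match lowerMove a i with
    | none => [a]
    | some (a', j) => a :: lowerList fuel a' j

/-- The colors of the successive covering relations produced by the lowering algorithm:
a lowering step at index `j` replaces `(a_j, a_{j+1})` by `(a_j - 1, a_{j+1} + 1)` and has
color `j + 1`. -/
def lowerColors : ℕ → List ℕ → ℕ → List ℕ
  | 0, _, _ => []
  | fuel + 1, a, i =>
    match lowerMove a i with
    | none => []
    | some (a', j) => (j + 1) :: lowerColors fuel a' j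

/-- The transversal chain `T_i(a)`: the elements obtained from `a` by the raising algorithm
together with those obtained by the lowering algorithm, both started at index `i ∈ M(a)`.
(The fuels `rk(a)` and `a.length * a.sum` are always sufficient, since each raising move
decreases the rank by 1 and each lowering move increases it by 1, within `[0, n·m]`.) -/
def Tset (a : List ℕ) (i : ℕ) : Set (List ℕ) :=
  {x | x ∈ raiseList (rkL a) a i ∨ x ∈ lowerList (a.length * a.sum) a i}

end OHara




lemma fgap_ex (S : Finset ℕ) (j : ℕ) : ∃ t, j + t ∉ S := by
  refine ⟨S.sup id + 1, fun h => ?_⟩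
  have h2 : id (j + (S.sup id + 1)) ≤ S.sup id := Finset.le_sup h
  simp only [id] at h2; omega

noncomputable def Fgap (S : Finset ℕ) (j : ℕ) : ℕ := Nat.find (fgap_ex S j)

lemma fgap_spec (S : Finset ℕ) (j : ℕ) : j + Fgap S j ∉ S := Nat.find_spec (fgap_ex S j)

lemma fgap_min {S : Finset ℕ} {j k : ℕ} (h : k < Fgap S j) : j + k ∈ S := by
  have := Nat.find_min (fgap_ex S j) h; simpa using this

lemma fgap_le {S : Finset ℕ} {j t : ℕ} (h : j + t ∉ S) : Fgap S j ≤ t :=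
  Nat.find_min' _ h

lemma fgap_eq {S : Finset ℕ} {j t : ℕ} (h1 : j + t ∉ S) (h2 : ∀ k < t, j + k ∈ S) :
    Fgap S j = t :=
  le_antisymm (fgap_le h1) (by by_contra h; push_neg at h; exact fgap_spec S j (h2 _ h))

lemma fgap_congr {S T : Finset ℕ} {j : ℕ} (h : ∀ k, j ≤ k → (k ∈ S ↔ k ∈ T)) :
    Fgap S j = Fgap T j := by
  refine (fgap_eq ?_ ?_).symm
  · exact fun hm => fgap_spec S j ((h _ (by omega)).mpr hm)
  · exact fun k hk => (h _ (by omega)).mp (fgap_min hk)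

lemma fgap_pos {S : Finset ℕ} {j : ℕ} : j ∈ S ↔ 0 < Fgap S j := by
  constructor
  · intro h; by_contra hle; push_neg at hle
    have h0 : Fgap S j = 0 := by omega
    have := fgap_spec S j; rw [h0] at this; simp at this; exact this h
  · intro h; simpa using fgap_min h

lemma fgap_succ {S : Finset ℕ} {j : ℕ} (h : j ∈ S) : Fgap S j = Fgap S (j+1) + 1 := by
  refine fgap_eq ?_ ?_
  · have := fgap_spec S (j+1); rwa [show j + (Fgap S (j+1) + 1) = j + 1 + Fgap S (j+1) by omega]
  · intro k hk
    rcases Nat.eq_zero_or_pos k with rfl | hkp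
    · simpa using h
    · have : k - 1 < Fgap S (j+1) := by omega
      have := fgap_min this
      rwa [show j + 1 + (k-1) = j + k by omega] at this

open OHara

lemma mem_leftEnds {S : Finset ℕ} {c : ℕ} :
    c ∈ leftEnds S ↔ c ∈ S ∧ (c = 0 ∨ c - 1 ∉ S) := by
  simp [leftEnds, Finset.mem_filter]

lemma compF_leftEnd {S : Finset ℕ} {c : ℕ} (hc : c ∈ S) (hl : c = 0 ∨ c - 1 ∉ S) :
    compF S c = Finset.Icc c (c + Fgap S c - 1) := by
  have hF : 0 < Fgap S c := fgap_pos.mp hc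
  ext k
  simp only [compF, Finset.mem_filter, Finset.mem_Icc]
  constructor
  · rintro ⟨hk, hsub⟩
    constructor
    · by_contra hlt; push_neg at hlt
      have hc1 : c - 1 ∈ Finset.Icc (min c k) (max c k) := by
        simp [Finset.mem_Icc]; omega
      have := hsub hc1
      rcases hl with h0 | h1
      · omega
      · exact h1 this
    · by_contra hgt; push_neg at hgt
      have hct : c + Fgap S c ∈ Finset.Icc (min c k) (max c k) := by
        simp [Finset.mem_Icc]; omega
      exact fgap_spec S c (hsub hct)
  · rintro ⟨h1, h2⟩
    have hk : k ∈ S := by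
      have : k - c < Fgap S c := by omega
      have := fgap_min this; rwa [show c + (k - c) = k by omega] at this
    refine ⟨hk, fun x hx => ?_⟩
    simp only [Finset.mem_Icc] at hx
    have : x - c < Fgap S c := by omega
    have := fgap_min this; rwa [show c + (x - c) = x by omega] at this

lemma card_compF_leftEnd {S : Finset ℕ} {c : ℕ} (hc : c ∈ S) (hl : c = 0 ∨ c - 1 ∉ S) :
    (compF S c).card = Fgap S c := by
  have hF : 0 < Fgap S c := fgap_pos.mp hc
  rw [compF_leftEnd hc hl, Nat.card_Icc]; omega

lemma mem_ActF {a : List ℕ} {j : ℕ} :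
    j ∈ ActF a ↔ j ∈ Mset a ∨ (1 ≤ j ∧ j - 1 ∈ Mset a) := by
  simp only [ActF, Finset.mem_union, Finset.mem_image]
  constructor
  · rintro (h | ⟨x, hx, rfl⟩)
    · exact Or.inl h
    · exact Or.inr ⟨by omega, by simpa using hx⟩
  · rintro (h | ⟨h1, h2⟩)
    · exact Or.inl h
    · exact Or.inr ⟨j - 1, h2, by omega⟩

lemma survives_iff (a : List ℕ) (j : ℕ) :
    survivesB a j = true ↔ ((j = 0 ∨ j - 1 ∉ Mset a) ∧ Even (Fgap (Mset a) j)) := by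
  simp only [survivesB, decide_eq_true_eq]
  by_cases hj : j ∈ Mset a
  · have hact : j ∈ ActF a := mem_ActF.mpr (Or.inl hj)
    by_cases hl : j = 0 ∨ j - 1 ∉ Mset a
    · have hle : j ∈ leftEnds (Mset a) := mem_leftEnds.mpr ⟨hj, hl⟩
      rw [card_compF_leftEnd hj hl]
      tauto
    · push_neg at hl
      have : j ∉ leftEnds (Mset a) := fun h => (mem_leftEnds.mp h).2.elim hl.1 (fun h2 => h2 hl.2)
      tauto
  · have hF : Fgap (Mset a) j = 0 := by
      by_contra h
      exact hj (fgap_pos.mpr (Nat.pos_of_ne_zero h))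
    have hnl : j ∉ leftEnds (Mset a) := fun h => hj (mem_leftEnds.mp h).1
    by_cases hl : j = 0 ∨ j - 1 ∉ Mset a
    · have : j ∉ ActF a := by
        rw [mem_ActF]; push_neg; exact ⟨hj, fun h1 => by rcases hl with h|h; omega; exact h⟩
      simp [this, hF, hl]
    · push_neg at hl
      have : j ∈ ActF a := mem_ActF.mpr (Or.inr ⟨by omega, hl.2⟩)
      tauto


lemma card_odd_even_rev (t : ℕ) :
    ((Finset.range t).filter (fun k => Odd (t - k))).card = (t+1)/2 ∧
    ((Finset.range t).filter (fun k => Even (t - k))).card = t/2 := by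
  induction t with
  | zero => simp
  | succ t ih =>
    have hsplit : ∀ (p : ℕ → Prop) [DecidablePred p],
        ((Finset.range (t+1)).filter p).card
          = ((Finset.range t).filter p).card + (if p t then 1 else 0) := by
      intro p _
      rw [Finset.range_add_one, Finset.filter_insert]
      split
      · rw [Finset.card_insert_of_notMem (by simp)]
      · rfl
    have e1 : ∀ k ∈ Finset.range t, (Odd (t + 1 - k) ↔ Even (t - k)) := by
      intro k hk; simp only [Finset.mem_range] at hk
      rw [show t + 1 - k = (t - k) + 1 by omega]
      exact Nat.odd_add_one.trans Nat.not_odd_iff_even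
    have e2 : ∀ k ∈ Finset.range t, (Even (t + 1 - k) ↔ Odd (t - k)) := by
      intro k hk; simp only [Finset.mem_range] at hk
      rw [show t + 1 - k = (t - k) + 1 by omega]
      exact Nat.even_add_one.trans Nat.not_even_iff_odd
    constructor
    · rw [hsplit, Finset.filter_congr e1, ih.2, if_pos (by simp)]
      omega
    · rw [hsplit, Finset.filter_congr e2, ih.1, if_neg (by simp [Nat.odd_iff])]
      omega

lemma card_odd_rev (t : ℕ) :
    ((Finset.range t).filter (fun k => Odd (t - k))).card = (t+1)/2 :=
  (card_odd_even_rev t).1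

lemma ecd_sum_eq (S : Finset ℕ) :
    ∑ c ∈ leftEnds S, ((compF S c).card + 1)/2
      = (S.filter (fun j => Odd (Fgap S j))).card := by
  induction S using Finset.strongInduction with
  | _ S ih =>
  by_cases hS : S = ∅
  · subst hS; simp [leftEnds]
  have hne : S.Nonempty := Finset.nonempty_of_ne_empty hS
  set c := S.min' hne with hcdef
  have hc : c ∈ S := S.min'_mem hne
  have hmin : ∀ x ∈ S, c ≤ x := fun x hx => S.min'_le x hx
  set t := Fgap S c with htdef
  have htpos : 0 < t := fgap_pos.mp hc
  set R : Finset ℕ := Finset.Icc c (c + t - 1) with hRdef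
  set S₂ : Finset ℕ := S \ R with hS2def
  have hRS : R ⊆ S := by
    intro x hx
    simp only [hRdef, Finset.mem_Icc] at hx
    have h1 : x - c < t := by omega
    have := fgap_min h1
    rwa [show c + (x - c) = x by omega] at this
  have hcR : c ∈ R := by simp [hRdef, Finset.mem_Icc]; omega
  have hS2hi : ∀ x ∈ S₂, c + t + 1 ≤ x := by
    intro x hx
    simp only [hS2def, Finset.mem_sdiff, hRdef, Finset.mem_Icc] at hx
    have h1 := hmin x hx.1
    have h2 : x ≠ c + t := fun h => fgap_spec S c (h ▸ hx.1)
    omega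
  have hagree : ∀ k, c + t ≤ k → (k ∈ S ↔ k ∈ S₂) := by
    intro k hk
    simp only [hS2def, Finset.mem_sdiff, hRdef, Finset.mem_Icc]
    constructor
    · intro h; exact ⟨h, by omega⟩
    · exact fun h => h.1
  have hssub : S₂ ⊂ S := by
    rw [Finset.ssubset_iff_of_subset (Finset.sdiff_subset)]
    exact ⟨c, hc, by simp [hS2def, Finset.mem_sdiff, hcR]⟩
  have hcle : c = 0 ∨ c - 1 ∉ S := by
    rcases Nat.eq_zero_or_pos c with h | h
    · exact Or.inl h
    · exact Or.inr (fun hmem => by have := hmin _ hmem; omega)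
  have hS2S : S₂ ⊆ S := Finset.sdiff_subset
  have hgap : c + t ∉ S := by rw [htdef]; exact fgap_spec S c
  have hleS2 : ∀ x, x ∈ leftEnds S₂ → (x ∈ S ∧ c + t + 1 ≤ x ∧ (x = 0 ∨ x - 1 ∉ S)) := by
    intro x hx
    rw [mem_leftEnds] at hx
    have hxS : x ∈ S := hS2S hx.1
    have hxhi := hS2hi x hx.1
    refine ⟨hxS, hxhi, Or.inr fun hmem => ?_⟩
    have hx1 : x - 1 ∈ S₂ := by
      rcases Nat.eq_or_lt_of_le hxhi with h | h
      · exact absurd (by rw [show c + t = x - 1 by omega]; exact hmem) hgap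
      · exact (hagree (x-1) (by omega)).mp hmem
    rcases hx.2 with h0 | h1
    · omega
    · exact h1 hx1
  have hleft : leftEnds S = insert c (leftEnds S₂) := by
    ext x
    rw [Finset.mem_insert, mem_leftEnds, mem_leftEnds]
    constructor
    · rintro ⟨hxS, hxl⟩
      by_cases hxc : x = c
      · exact Or.inl hxc
      · refine Or.inr ⟨?_, ?_⟩
        · simp only [hS2def, Finset.mem_sdiff]
          refine ⟨hxS, fun hxR => ?_⟩
          simp only [hRdef, Finset.mem_Icc] at hxR
          have hx1R : x - 1 ∈ R := by simp [hRdef, Finset.mem_Icc]; omega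
          have := hRS hx1R
          have hxpos : 1 ≤ x := by
            have := hmin x hxS; omega
          rcases hxl with h0 | h1
          · omega
          · exact h1 this
        · rcases hxl with h0 | h1
          · exact Or.inl h0
          · exact Or.inr (fun hh => h1 (hS2S hh))
    · rintro (rfl | hx)
      · exact ⟨hc, hcle⟩
      · have := hleS2 x (mem_leftEnds.mpr hx)
        exact ⟨this.1, this.2.2⟩
  have hcnot : c ∉ leftEnds S₂ := by
    rw [mem_leftEnds]
    rintro ⟨h1, -⟩
    have := hS2hi c h1; omega
  have hcard_c : (compF S c).card = t := card_compF_leftEnd hc hcle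
  have hfg2 : ∀ x, c + t ≤ x → Fgap S x = Fgap S₂ x :=
    fun x hx => fgap_congr (fun k hk => hagree k (by omega))
  have hsum2 : ∀ x ∈ leftEnds S₂, ((compF S x).card + 1)/2 = ((compF S₂ x).card + 1)/2 := by
    intro x hx
    obtain ⟨hxS, hxhi, hxl⟩ := hleS2 x hx
    rw [mem_leftEnds] at hx
    rw [card_compF_leftEnd hxS hxl, card_compF_leftEnd hx.1 hx.2, hfg2 x (by omega)]
  -- LHS
  rw [hleft, Finset.sum_insert hcnot, hcard_c, Finset.sum_congr rfl hsum2, ih S₂ hssub]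
  -- RHS
  have hSRU : S = R ∪ S₂ := by
    simp only [hS2def]
    rw [Finset.union_sdiff_of_subset hRS]
  have hdisj : Disjoint (R.filter (fun j => Odd (Fgap S j))) (S₂.filter (fun j => Odd (Fgap S₂ j))) := by
    apply Finset.disjoint_filter_filter
    simp only [hS2def]
    exact Finset.disjoint_sdiff
  have hfiltS2 : S₂.filter (fun j => Odd (Fgap S j)) = S₂.filter (fun j => Odd (Fgap S₂ j)) := by
    apply Finset.filter_congr
    intro x hx
    rw [hfg2 x (by have := hS2hi x hx; omega)]
  have hfsplit : S.filter (fun j => Odd (Fgap S j))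
      = R.filter (fun j => Odd (Fgap S j)) ∪ S₂.filter (fun j => Odd (Fgap S j)) := by
    rw [← Finset.filter_union, ← hSRU]
  rw [hfsplit, hfiltS2, Finset.card_union_of_disjoint hdisj]
  congr 1
  -- card over R
  have hRmap : R = (Finset.range t).map ⟨(c + ·), add_right_injective c⟩ := by
    ext x
    simp only [hRdef, Finset.mem_Icc, Finset.mem_map, Finset.mem_range,
      Function.Embedding.coeFn_mk]
    constructor
    · intro h; exact ⟨x - c, by omega, by omega⟩
    · rintro ⟨k, hk, rfl⟩; omega
  have hfgR : ∀ j ∈ R, Fgap S j = t - (j - c) := by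
    intro j hj
    simp only [hRdef, Finset.mem_Icc] at hj
    refine fgap_eq ?_ ?_
    · rw [show j + (t - (j - c)) = c + t by omega]
      exact fgap_spec S c
    · intro k hk
      have h1 : (j - c) + k < t := by omega
      have := fgap_min h1
      rwa [show c + (j - c + k) = j + k by omega] at this
  rw [Finset.filter_congr (fun j hj => by rw [hfgR j hj])]
  rw [hRmap, Finset.filter_map, Finset.card_map]
  symm
  convert card_odd_rev t using 2
  ext k
  simp [Function.comp]


lemma getD_set_ne {l : List ℕ} {n j : ℕ} (h : n ≠ j) (x : ℕ) :
    (l.set n x).getD j 0 = l.getD j 0 := by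
  simp [List.getD_eq_getElem?_getD, List.getElem?_set_ne h]
lemma getD_set_eq {l : List ℕ} {n : ℕ} (h : n < l.length) (x : ℕ) :
    (l.set n x).getD n 0 = x := by
  simp [List.getD_eq_getElem?_getD, List.getElem?_set_eq_of_lt x h]

lemma mem_Mset {a : List ℕ} {j : ℕ} :
    j ∈ Mset a ↔ j + 1 < a.length ∧ a.getD j 0 + a.getD (j+1) 0 = sprL a := by
  simp only [Mset, Finset.mem_filter, Finset.mem_range]
  constructor
  · rintro ⟨h1, h2⟩; exact ⟨by omega, h2⟩
  · rintro ⟨h1, h2⟩; exact ⟨by omega, h2⟩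

lemma le_sprL {a : List ℕ} {j : ℕ} (h : j + 1 < a.length) :
    a.getD j 0 + a.getD (j+1) 0 ≤ sprL a :=
  Finset.le_sup (f := fun i => a.getD i 0 + a.getD (i + 1) 0)
    (Finset.mem_range.mpr (by omega))

lemma sprL_le {a : List ℕ} {s : ℕ}
    (h : ∀ j, j + 1 < a.length → a.getD j 0 + a.getD (j+1) 0 ≤ s) : sprL a ≤ s :=
  Finset.sup_le (fun j hj => h j (by have := Finset.mem_range.mp hj; omega))

lemma sum_set_nat (l : List ℕ) (k x : ℕ) (hk : k < l.length) :
    (l.set k x).sum + l.getD k 0 = l.sum + x := by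
  induction l generalizing k with
  | nil => simp at hk
  | cons y t ih =>
    cases k with
    | zero => simp [List.getD_cons_zero]; omega
    | succ k =>
      rw [show (y::t).set (k+1) x = y :: t.set k x from rfl]
      simp only [List.sum_cons, List.getD_cons_succ]
      have := ih k (by simpa using hk)
      omega


lemma survives_false_of {a : List ℕ} {j : ℕ}
    (h : ¬((j = 0 ∨ j - 1 ∉ OHara.Mset a) ∧ Even (Fgap (OHara.Mset a) j))) :
    OHara.survivesB a j = false := by
  rw [Bool.eq_false_iff]
  intro hb
  exact h ((survives_iff a j).mp hb)

lemma core_omega (a : List ℕ) (i : ℕ) (hi : i ∈ Mset a) (hpos : 0 < a.getD (i+1) 0)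
    (hlt : 1 ≤ i → a.getD (i-1) 0 < a.getD (i+1) 0)
    (a' : List ℕ) (ha' : a' = (a.set i (a.getD i 0 + 1)).set (i+1) (a.getD (i+1) 0 - 1)) :
    omegaL a' = omegaL a ∧ sprL a' = sprL a ∧ ecdL a' = ecdL a ∧
      a'.length = a.length ∧ a'.sum = a.sum := by
  obtain ⟨hi1, hPi⟩ := mem_Mset.mp hi
  have hlen' : a'.length = a.length := by rw [ha']; simp
  have hget : ∀ j, j ≠ i → j ≠ i+1 → a'.getD j 0 = a.getD j 0 := fun j h1 h2 => by
    rw [ha', getD_set_ne (by omega), getD_set_ne (by omega)]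
  have hgi : a'.getD i 0 = a.getD i 0 + 1 := by
    rw [ha', getD_set_ne (by omega), getD_set_eq (by omega)]
  have hgi1 : a'.getD (i+1) 0 = a.getD (i+1) 0 - 1 := by
    rw [ha', getD_set_eq (by rw [List.length_set]; omega)]
  have hsum' : a'.sum = a.sum := by
    have h1 := sum_set_nat a i (a.getD i 0 + 1) (by omega)
    have h2 := sum_set_nat (a.set i (a.getD i 0 + 1)) (i+1) (a.getD (i+1) 0 - 1)
      (by rw [List.length_set]; omega)
    rw [getD_set_ne (by omega)] at h2
    rw [ha']; omega
  have hs' : sprL a' = sprL a := by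
    apply le_antisymm
    · apply sprL_le; intro j hj
      rw [hlen'] at hj
      by_cases h1 : j = i
      · subst h1; rw [hgi, hgi1]; omega
      · by_cases h2 : j = i + 1
        · subst h2
          rw [hgi1, hget (i+1+1) (by omega) (by omega)]
          have := le_sprL (a := a) hj
          omega
        · by_cases h3 : j + 1 = i
          · have hii : 1 ≤ i := by omega
            have hl := hlt hii
            rw [hget j (by omega) (by omega), show j + 1 = i from h3, hgi]
            rw [show j = i - 1 by omega]
            omega
          · rw [hget j h1 h2, hget (j+1) (by omega) (by omega)]
            exact le_sprL hj
    · have h := le_sprL (a := a') (j := i) (by omega)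
      rw [hgi, hgi1] at h
      omega
  have him : 1 ≤ i → i - 1 ∉ Mset a := by
    intro h1 hmem
    obtain ⟨h2, h3⟩ := mem_Mset.mp hmem
    rw [show i - 1 + 1 = i by omega] at h3
    have := hlt h1
    omega
  have hchar : ∀ j, j ∈ Mset a' ↔ ((j ∈ Mset a ∧ j ≠ i + 1) ∨ j = i ∨
      (j + 1 = i ∧ a.getD (i-1) 0 + 1 = a.getD (i+1) 0)) := by
    intro j
    rw [mem_Mset, hs', hlen']
    by_cases hji : j = i
    · subst hji
      rw [hgi, hgi1]
      constructor
      · intro _; exact Or.inr (Or.inl rfl)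
      · intro _; exact ⟨hi1, by omega⟩
    · by_cases hji1 : j = i + 1
      · subst hji1
        rw [hgi1, hget (i+1+1) (by omega) (by omega)]
        constructor
        · rintro ⟨h1, h2⟩
          have := le_sprL (a := a) h1
          omega
        · rintro ((⟨-, h⟩) | h | ⟨h, -⟩) <;> omega
      · by_cases hjpi : j + 1 = i
        · have hvv : a'.getD (j+1) 0 = a.getD i 0 + 1 := by rw [hjpi]; exact hgi
          rw [hget j hji hji1, hvv]
          have hnm : j ∉ Mset a := by
            have := him (by omega)
            rwa [show i - 1 = j by omega] at this
          constructor
          · rintro ⟨h1, h2⟩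
            refine Or.inr (Or.inr ⟨hjpi, ?_⟩)
            rw [show i - 1 = j by omega]
            omega
          · rintro ((⟨h, -⟩) | h | ⟨-, h⟩)
            · exact absurd h hnm
            · omega
            · rw [show i - 1 = j by omega] at h
              constructor
              · omega
              · omega
        · rw [hget j hji hji1, hget (j+1) (by omega) (by omega)]
          rw [← mem_Mset]
          constructor
          · intro h; exact Or.inl ⟨h, hji1⟩
          · rintro ((⟨h, -⟩) | h | ⟨h, -⟩)
            · exact h
            · exact absurd h hji
            · exact absurd h hjpi
  have hiM' : i ∈ Mset a' := (hchar i).mpr (Or.inr (Or.inl rfl))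
  have hi1M' : i + 1 ∉ Mset a' := fun h => by
    rcases (hchar (i+1)).mp h with ⟨-, h⟩ | h | ⟨h, -⟩ <;> omega
  have hgapM'i : Fgap (Mset a') i = 1 := by
    refine fgap_eq (by simpa using hi1M') ?_
    intro k hk
    rw [show k = 0 by omega]
    simpa using hiM'
  have hK1 : ∀ j, i + 2 ≤ j → Fgap (Mset a') j = Fgap (Mset a) j := by
    intro j hj
    refine fgap_congr (fun k hk => ?_)
    rw [hchar k]
    constructor
    · rintro ((⟨h, -⟩) | h | ⟨h, -⟩)
      · exact h
      · omega
      · omega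
    · intro h; exact Or.inl ⟨h, by omega⟩
  have hK2 : ∀ j, j < i → (Even (Fgap (Mset a') j) ↔ Even (Fgap (Mset a) j)) := by
    intro j hj
    have hm1 : i - 1 ∉ Mset a := him (by omega)
    have ht_le : Fgap (Mset a) j ≤ i - 1 - j :=
      fgap_le (by rw [show j + (i-1-j) = i-1 by omega]; exact hm1)
    by_cases hcase : j + Fgap (Mset a) j < i - 1
    · have heq : Fgap (Mset a') j = Fgap (Mset a) j := by
        refine fgap_eq ?_ ?_
        · rw [hchar]
          push_neg
          refine ⟨fun h => absurd h (fgap_spec _ _), by omega, fun h => by omega⟩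
        · intro k hk
          rw [hchar]
          exact Or.inl ⟨fgap_min hk, by omega⟩
      rw [heq]
    · have hFeq : Fgap (Mset a) j = i - 1 - j := by omega
      by_cases hcond : a.getD (i-1) 0 + 1 = a.getD (i+1) 0
      · have heq : Fgap (Mset a') j = (i - 1 - j) + 2 := by
          refine fgap_eq ?_ ?_
          · rw [show j + (i - 1 - j + 2) = i + 1 by omega]
            exact hi1M'
          · intro k hk
            rw [hchar]
            by_cases h1 : j + k < i - 1
            · exact Or.inl ⟨fgap_min (by omega), by omega⟩
            · by_cases h2 : j + k = i - 1
              · exact Or.inr (Or.inr ⟨by omega, hcond⟩)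
              · exact Or.inr (Or.inl (by omega))
        rw [heq, hFeq]
        simp [Nat.even_iff, Nat.add_mod]
      · have heq : Fgap (Mset a') j = i - 1 - j := by
          refine fgap_eq ?_ ?_
          · rw [show j + (i - 1 - j) = i - 1 by omega, hchar]
            push_neg
            refine ⟨fun h => absurd h hm1, by omega, fun _ => hcond⟩
          · intro k hk
            rw [hchar]
            exact Or.inl ⟨fgap_min (by omega), by omega⟩
        rw [heq, hFeq]
  have podd2 : ∀ x : ℕ, Odd (x+2) ↔ Odd x := fun x => by
    simp [Nat.odd_iff, Nat.add_mod]
  have hgapcond : ∀ (h1 : 1 ≤ i), a.getD (i-1) 0 + 1 = a.getD (i+1) 0 →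
      Fgap (Mset a') (i-1) = 2 := by
    intro h1 hc
    refine fgap_eq ?_ ?_
    · rw [show i - 1 + 2 = i + 1 by omega]; exact hi1M'
    · intro k hk
      rcases (by omega : k = 0 ∨ k = 1) with rfl | rfl
    
      · rw [Nat.add_zero]; exact (hchar _).mpr (Or.inr (Or.inr ⟨by omega, hc⟩))
      · rw [show i - 1 + 1 = i by omega]; exact hiM'
  have hsurv_eq : ∀ j, j ≠ i → j ≠ i+1 → j ≠ i+2 → survivesB a' j = survivesB a j := by
    intro j h1 h2 h3
    rw [Bool.eq_iff_iff, survives_iff, survives_iff]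
    apply and_congr
    · by_cases hj0 : j = 0
      · simp [hj0]
      · have hmm : j - 1 ∈ Mset a' ↔ j - 1 ∈ Mset a := by
          rw [hchar]
          constructor
          · rintro ((⟨h, -⟩) | h | ⟨h, -⟩)
            · exact h
            · omega
            · omega
          · intro h; exact Or.inl ⟨h, by omega⟩
        tauto
    · rcases lt_or_ge j i with h | h
      · exact hK2 j h
      · have hj2 : i + 2 ≤ j := by omega
        rw [hK1 j hj2]
  have hsurvi' : survivesB a' i = false := by
    apply survives_false_of
    rintro ⟨-, hev⟩
    rw [hgapM'i] at hev
    simp [Nat.even_iff] at hev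
  have hsurvi1 : survivesB a (i+1) = false := by
    apply survives_false_of
    rintro ⟨hl, -⟩
    rcases hl with h | h
    · omega
    · rw [Nat.add_sub_cancel] at h; exact h hi
  have hsurvi1' : survivesB a' (i+1) = false := by
    apply survives_false_of
    rintro ⟨hl, -⟩
    rcases hl with h | h
    · omega
    · rw [Nat.add_sub_cancel] at h; exact h hiM'
  refine ⟨?_, hs', ?_, hlen', hsum'⟩
  · -- omegaL a' = omegaL a
    by_cases hd : i + 1 ∈ Mset a
    · -- d ≥ 1
      have hi2 : i + 1 + 1 < a.length := (mem_Mset.mp hd).1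
      have hval : a.getD (i+2) 0 = a.getD i 0 := by
        have h := (mem_Mset.mp hd).2
        rw [show i + 1 + 1 = i + 2 from rfl] at h
        omega
      have hsurv2f : survivesB a (i+2) = false := by
        apply survives_false_of
        rintro ⟨hl, -⟩
        rcases hl with h | h
        · omega
        · rw [show i + 2 - 1 = i + 1 by omega] at h; exact h hd
      have hFi : Fgap (Mset a) i = Fgap (Mset a) (i+2) + 2 := by
        have e1 := fgap_succ hi
        have e2 := fgap_succ hd
        rw [show i + 1 + 1 = i + 2 from rfl] at e2
        omega
      have hsurv2' : survivesB a' (i+2) = survivesB a i := by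
        rw [Bool.eq_iff_iff, survives_iff, survives_iff]
        apply and_congr
        · apply iff_of_true
          · exact Or.inr (by rw [show i + 2 - 1 = i + 1 by omega]; exact hi1M')
          · rcases Nat.eq_zero_or_pos i with h | h
            · exact Or.inl h
            · exact Or.inr (him (by omega))
        · rw [hK1 (i+2) (by omega), hFi]
          simp [Nat.even_iff, Nat.add_mod]
      have hsplit : List.range a.length =
          (List.range i ++ [i, i+1, i+2]) ++
            (List.range (a.length - (i+3))).map (fun x => (i+3) + x) := by
        have h1 : List.range ((i+3) + (a.length - (i+3)))
            = List.range (i+3) ++ (List.range (a.length-(i+3))).map (fun x => (i+3)+x) :=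
          List.range_add
        have h2 : List.range (i+3) = List.range i ++ (List.range 3).map (fun x => i + x) :=
          List.range_add
        have h3 : (List.range 3).map (fun x => i + x) = [i, i+1, i+2] := rfl
        conv_lhs => rw [show a.length = (i+3) + (a.length - (i+3)) by omega]
        rw [h1, h2, h3]
      unfold omegaL
      rw [hlen', hsplit]
      simp only [List.filter_append, List.map_append]
      have seg1 : ((List.range i).filter (fun j => survivesB a' j)).map (a'.getD · 0)
          = ((List.range i).filter (fun j => survivesB a j)).map (a.getD · 0) := by
        rw [List.filter_congr (fun j hj => by
          have hji : j < i := List.mem_range.mp hj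
          exact hsurv_eq j (by omega) (by omega) (by omega))]
        apply List.map_congr_left
        intro j hj
        have hji : j < i := List.mem_range.mp (List.mem_of_mem_filter hj)
        exact hget j (by omega) (by omega)
      have seg2 : (([i, i+1, i+2]).filter (fun j => survivesB a' j)).map (a'.getD · 0)
          = (([i, i+1, i+2]).filter (fun j => survivesB a j)).map (a.getD · 0) := by
        cases hb : survivesB a i with
        | false =>
          simp [List.filter_cons, hsurvi', hsurvi1', hsurv2', hsurvi1, hsurv2f, hb]
        | true =>
          have hv2 : a'.getD (i+2) 0 = a.getD i 0 := by
            rw [hget (i+2) (by omega) (by omega)]; exact hval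
          simp only [List.filter_cons, hsurvi', hsurvi1', hsurv2', hsurvi1, hsurv2f, hb,
            cond_true, cond_false, List.filter_nil, List.map_cons, List.map_nil]
          simp only [List.getD_eq_getElem?_getD] at hv2
          simp [hv2]
      have seg3 : (((List.range (a.length - (i+3))).map (fun x => (i+3) + x)).filter
            (fun j => survivesB a' j)).map (a'.getD · 0)
          = (((List.range (a.length - (i+3))).map (fun x => (i+3) + x)).filter
            (fun j => survivesB a j)).map (a.getD · 0) := by
        rw [List.filter_map, List.filter_map, List.map_map, List.map_map]
        rw [List.filter_congr (fun x _ => by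
          show (fun j => survivesB a' j) ((i+3) + x) = (fun j => survivesB a j) ((i+3) + x)
          exact hsurv_eq _ (by omega) (by omega) (by omega))]
        apply List.map_congr_left
        intro x _
        show a'.getD ((i+3) + x) 0 = a.getD ((i+3) + x) 0
        exact hget _ (by omega) (by omega)
      rw [seg1, seg2, seg3]
    · -- d = 0
      have hgapMi : Fgap (Mset a) i = 1 := by
        refine fgap_eq (by simpa using hd) ?_
        intro k hk
        rw [show k = 0 by omega, Nat.add_zero]
        exact hi
      have hsurvi : survivesB a i = false := by
        apply survives_false_of
        rintro ⟨-, hev⟩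
        rw [hgapMi] at hev
        simp [Nat.even_iff] at hev
      have hsurv2 : survivesB a' (i+2) = survivesB a (i+2) := by
        rw [Bool.eq_iff_iff, survives_iff, survives_iff]
        apply and_congr
        · apply iff_of_true
          · exact Or.inr (by rw [show i + 2 - 1 = i + 1 by omega]; exact hi1M')
          · exact Or.inr (by rw [show i + 2 - 1 = i + 1 by omega]; exact hd)
        · rw [hK1 (i+2) (by omega)]
      unfold omegaL
      rw [hlen']
      rw [List.filter_congr (fun j _ => by
        show survivesB a' j = survivesB a j
        by_cases e1 : j = i
        · subst e1; rw [hsurvi', hsurvi]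
        · by_cases e2 : j = i + 1
          · subst e2; rw [hsurvi1', hsurvi1]
          · by_cases e3 : j = i + 2
            · subst e3; exact hsurv2
            · exact hsurv_eq j e1 e2 e3)]
      apply List.map_congr_left
      intro j hj
      rw [List.mem_filter] at hj
      have hjs := hj.2
      apply hget
      · rintro rfl; rw [hsurvi] at hjs; simp at hjs
      · rintro rfl; rw [hsurvi1] at hjs; simp at hjs
  · -- ecdL a' = ecdL a
    have e1 : ecdL a' = ((Mset a').filter (fun j => Odd (Fgap (Mset a') j))).card := by
      unfold ecdL; exact ecd_sum_eq _
    have e2 : ecdL a = ((Mset a).filter (fun j => Odd (Fgap (Mset a) j))).card := by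
      unfold ecdL; exact ecd_sum_eq _
    rw [e1, e2]
    have hoddK2 : ∀ j, j < i → (Odd (Fgap (Mset a') j) ↔ Odd (Fgap (Mset a) j)) := by
      intro j hj
      rw [← Nat.not_even_iff_odd, ← Nat.not_even_iff_odd, hK2 j hj]
    have hmm : ∀ j, j ≠ i → j ≠ i+1 → j + 1 ≠ i → (j ∈ Mset a' ↔ j ∈ Mset a) := by
      intro j h1 h2 h3
      rw [hchar]
      constructor
      · rintro ((⟨h, -⟩) | h | ⟨h, -⟩)
        · exact h
        · omega
        · omega
      · intro h; exact Or.inl ⟨h, h2⟩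
    have hboth : ∀ j, j ≠ i → j ≠ i+1 → j + 1 ≠ i →
        ((j ∈ Mset a' ∧ Odd (Fgap (Mset a') j)) ↔ (j ∈ Mset a ∧ Odd (Fgap (Mset a) j))) := by
      intro j h1 h2 h3
      apply and_congr (hmm j h1 h2 h3)
      rcases lt_or_ge j i with h | h
      · exact hoddK2 j h
      · rw [hK1 j (by omega)]
    have hcondcase : ∀ j, j + 1 = i →
        ¬(j ∈ Mset a' ∧ Odd (Fgap (Mset a') j)) ∧ ¬(j ∈ Mset a ∧ Odd (Fgap (Mset a) j)) := by
      intro j hj1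
      have hjm : j ∉ Mset a := by
        have := him (by omega)
        rwa [show i - 1 = j by omega] at this
      constructor
      · rintro ⟨hmem, hodd⟩
        rcases (hchar j).mp hmem with ⟨h, -⟩ | h | ⟨-, h⟩
        · exact hjm h
        · omega
        · rw [show j = i - 1 by omega] at hodd
          rw [hgapcond (by omega) h] at hodd
          rw [Nat.odd_iff] at hodd
          omega
      · rintro ⟨hmem, -⟩
        exact hjm hmem
    by_cases hd : i + 1 ∈ Mset a
    · have hFi : Fgap (Mset a) i = Fgap (Mset a) (i+2) + 2 := by
        have f1 := fgap_succ hi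
        have f2 := fgap_succ hd
        rw [show i + 1 + 1 = i + 2 from rfl] at f2
        omega
      have hFi1 : Fgap (Mset a) (i+1) = Fgap (Mset a) (i+2) + 1 := by
        have f2 := fgap_succ hd
        rw [show i + 1 + 1 = i + 2 from rfl] at f2
        omega
      set F2 := Fgap (Mset a) (i+2) with hF2
      set D := (((Mset a).filter (fun j => Odd (Fgap (Mset a) j))).erase i).erase (i+1)
        with hD
      set w : ℕ := if Odd F2 then i else i + 1 with hw
      have hinotD : i ∉ D := by
        rw [hD]
        intro h
        exact (Finset.mem_erase.mp (Finset.mem_of_mem_erase h)).1 rfl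
      have hwnotD : w ∉ D := by
        rw [hw]
        split
        · exact hinotD
        · rw [hD]; intro h
          exact (Finset.mem_erase.mp h).1 rfl
      have hmemD : ∀ j, j ≠ i → j ≠ i + 1 →
          (j ∈ D ↔ (j ∈ Mset a ∧ Odd (Fgap (Mset a) j))) := by
        intro j h1 h2
        rw [hD]
        simp [Finset.mem_erase, Finset.mem_filter, h1, h2]
      have claimA : (Mset a').filter (fun j => Odd (Fgap (Mset a') j)) = insert i D := by
        ext j
        rw [Finset.mem_filter, Finset.mem_insert]
        by_cases e0 : j = i
        · subst e0
          apply iff_of_true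
          · exact ⟨hiM', by rw [hgapM'i]; exact odd_one⟩
          · exact Or.inl rfl
        · by_cases e1 : j = i + 1
          · subst e1
            apply iff_of_false
            · rintro ⟨h, -⟩; exact hi1M' h
            · rintro (h | h)
              · omega
              · rw [hD] at h
                exact (Finset.mem_erase.mp h).1 rfl
          · have hr : (j = i ∨ j ∈ D) ↔ (j ∈ Mset a ∧ Odd (Fgap (Mset a) j)) := by
              rw [hmemD j e0 e1]
              constructor
              · rintro (h | h)
                · exact absurd h e0
                · exact h
              · exact Or.inr
            rw [hr]
            by_cases e2 : j + 1 = i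
            · obtain ⟨hA, hB⟩ := hcondcase j e2
              exact iff_of_false hA hB
            · exact hboth j e0 e1 e2
      have claimB : (Mset a).filter (fun j => Odd (Fgap (Mset a) j)) = insert w D := by
        ext j
        rw [Finset.mem_filter, Finset.mem_insert]
        by_cases e0 : j = i
        · subst e0
          by_cases hF : Odd F2
          · apply iff_of_true
            · exact ⟨hi, by rw [hFi]; exact (podd2 F2).mpr hF⟩
            · exact Or.inl (by rw [hw, if_pos hF])
          · apply iff_of_false
            · rintro ⟨-, h⟩
              rw [hFi] at h
              exact hF ((podd2 F2).mp h)
            · rintro (h | h)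
              · rw [hw, if_neg hF] at h; omega
              · exact hinotD h
        · by_cases e1 : j = i + 1
          · subst e1
            by_cases hF : Odd F2
            · apply iff_of_false
              · rintro ⟨-, h⟩
                rw [hFi1] at h
                exact (Nat.odd_add_one.mp h) hF
              · rintro (h | h)
                · rw [hw, if_pos hF] at h; omega
                · rw [hD] at h; exact (Finset.mem_erase.mp h).1 rfl
            · apply iff_of_true
              · refine ⟨hd, ?_⟩
                rw [hFi1]
                exact Nat.odd_add_one.mpr hF
              · exact Or.inl (by rw [hw, if_neg hF])
          · constructor
            · intro h; exact Or.inr ((hmemD j e0 e1).mpr h)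
            · rintro (h | h)
              · exfalso
                rw [hw] at h
                by_cases hF : Odd F2
                · rw [if_pos hF] at h; omega
                · rw [if_neg hF] at h; omega
              · exact (hmemD j e0 e1).mp h
      rw [claimA, claimB, Finset.card_insert_of_notMem hinotD,
        Finset.card_insert_of_notMem hwnotD]
    · have hgapMi : Fgap (Mset a) i = 1 := by
        refine fgap_eq (by simpa using hd) ?_
        intro k hk
        rw [show k = 0 by omega, Nat.add_zero]
        exact hi
      have hset : (Mset a').filter (fun j => Odd (Fgap (Mset a') j))
          = (Mset a).filter (fun j => Odd (Fgap (Mset a) j)) := by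
        ext j
        rw [Finset.mem_filter, Finset.mem_filter]
        by_cases e0 : j = i
        · subst e0
          apply iff_of_true
          · exact ⟨hiM', by rw [hgapM'i]; exact odd_one⟩
          · exact ⟨hi, by rw [hgapMi]; exact odd_one⟩
        · by_cases e1 : j = i + 1
          · subst e1
            exact iff_of_false (fun h => hi1M' h.1) (fun h => hd h.1)
          · by_cases e2 : j + 1 = i
            · obtain ⟨hA, hB⟩ := hcondcase j e2
              exact iff_of_false hA hB
            · exact hboth j e0 e1 e2
      rw [hset]

lemma sigmaAux_succ (fuel x : ℕ) (t : List ℕ) :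
    OHara.sigmaAux (fuel+1) (x :: t) = if (x::t).length ≤ 2 then [(x::t).sum]
      else List.replicate (OHara.ecdL (x::t) - 1) 0
        ++ [OHara.sprL (x::t) - OHara.sprL (OHara.omegaL (x::t))]
        ++ OHara.sigmaAux fuel (OHara.omegaL (x::t)) := rfl

open OHara in
/-- One step of the raising algorithm preserves `ω`, and consequently the signature. -/
theorem raising_step_preserves_omega_sigma (n m : ℕ) (hn : 1 ≤ n)
    (a : List ℕ) (hlen : a.length = n + 1) (hsum : a.sum = m)
    (i : ℕ) (hi : i ∈ Mset a) (hpos : 0 < a.getD (i + 1) 0)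
    (hlt : 1 ≤ i → a.getD (i - 1) 0 < a.getD (i + 1) 0)
    (a' : List ℕ)
    (ha' : a' = (a.set i (a.getD i 0 + 1)).set (i + 1) (a.getD (i + 1) 0 - 1)) :
    omegaL a' = omegaL a ∧ sigmaL a' = sigmaL a := by
  obtain ⟨ho, hspr, hecd, hl, hsum'⟩ := core_omega a i hi hpos hlt a' ha'
  refine ⟨ho, ?_⟩
  unfold sigmaL
  rw [hl, hlen]
  cases a with
  | nil => simp at hlen
  | cons x t =>
  cases a' with
  | nil => simp at hl
  | cons x' t' =>
  rw [sigmaAux_succ, sigmaAux_succ, hl, hsum', hecd, hspr, ho]
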